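/- Let R = [[D, C],[B, A]] be an (m+n)×(m+n) orthogonal real matrix (D is m×m, A is n×n) such that the pair (A,B) is controllable. Then every eigenvalue of A has modulus strictly less than 1. -/

import Mathlib

open Matrix

/-- If `R = [[D, C], [B, A]]` is an orthogonal real matrix and the pair `(A, B)` is
controllable, then every (complex) eigenvalue of `A` has modulus strictly less than 1. -/
theorem stmt14 (m n : ℕ)
    (D : Matrix (Fin m) (Fin m) ℝ) (C : Matrix (Fin m) (Fin n) ℝ)
    (B : Matrix (Fin n) (Fin m) ℝ) (A : Matrix (Fin n) (Fin n) ℝ)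
    (horth : (Matrix.fromBlocks D C B A)ᵀ * Matrix.fromBlocks D C B A = 1)
    -- controllability: the controllability matrix has full row rank `n`
    (hctrb : ∀ x : Fin n → ℝ,
      (∀ k : ℕ, k < n → Matrix.vecMul x ((A ^ k) * B) = 0) → x = 0) :
    ∀ μ : ℂ, μ ∈ spectrum ℂ (A.map (Complex.ofReal : ℝ → ℂ)) → ‖μ‖ < 1 := by
  intro μ hμ
  by_contra hge
  push_neg at hge
  set Aℂ : Matrix (Fin n) (Fin n) ℂ := A.map Complex.ofReal with hAc
  set Bℂ : Matrix (Fin n) (Fin m) ℂ := B.map Complex.ofReal with hBc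
  -- RRᵀ = 1
  have hR : (Matrix.fromBlocks D C B A) * (Matrix.fromBlocks D C B A)ᵀ = 1 :=
    mul_eq_one_comm.mp horth
  rw [Matrix.fromBlocks_transpose, Matrix.fromBlocks_multiply, ← Matrix.fromBlocks_one] at hR
  have hblock : B * Bᵀ + A * Aᵀ = 1 := ((Matrix.fromBlocks_inj.mp hR).2.2.2)
  have hblockC : Bℂ * Bℂᵀ + Aℂ * Aℂᵀ = 1 := by
    have := congrArg (fun M => M.map (Complex.ofRealHom : ℝ →+* ℂ)) hblock
    simp [Matrix.map_add, Matrix.map_mul, Matrix.map_one, Matrix.transpose_map] at this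
    exact this
  -- eigenvector of transpose
  rw [spectrum.mem_iff] at hμ
  have hdet : (algebraMap ℂ (Matrix (Fin n) (Fin n) ℂ) μ - Aℂ).det = 0 := by
    by_contra h
    exact hμ ((Matrix.isUnit_iff_isUnit_det _).mpr (isUnit_iff_ne_zero.mpr h))
  have hdetT : ((algebraMap ℂ (Matrix (Fin n) (Fin n) ℂ) μ - Aℂ)ᵀ).det = 0 := by
    rw [Matrix.det_transpose]; exact hdet
  obtain ⟨v, hv0, hv⟩ := (Matrix.exists_mulVec_eq_zero_iff).mpr hdetT
  have hev : Aℂᵀ *ᵥ v = μ • v := by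
    rw [Algebra.algebraMap_eq_smul_one, Matrix.transpose_sub, Matrix.sub_mulVec,
      sub_eq_zero, Matrix.transpose_smul, Matrix.transpose_one,
      Matrix.smul_mulVec, Matrix.one_mulVec] at hv
    exact hv.symm
  -- conjTranspose facts
  have hAH : Aℂᵀᴴ = Aℂ := by
    ext i j
    simp [Matrix.conjTranspose_apply, hAc, Matrix.map_apply]
  have hBH : Bℂᵀᴴ = Bℂ := by
    ext i j
    simp [Matrix.conjTranspose_apply, hBc, Matrix.map_apply]
  have key : ∀ (p q : ℕ) (M : Matrix (Fin p) (Fin q) ℂ) (w : Fin q → ℂ) (u : Fin p → ℂ),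
      star w ⬝ᵥ (Mᴴ *ᵥ u) = star (M *ᵥ w) ⬝ᵥ u := by
    intro p q M w u
    rw [Matrix.star_mulVec, Matrix.dotProduct_mulVec]
  -- the quadratic identity
  have hs : star v ⬝ᵥ ((Bℂ * Bℂᵀ + Aℂ * Aℂᵀ) *ᵥ v) = star v ⬝ᵥ v := by
    rw [hblockC, Matrix.one_mulVec]
  have h1 := key _ _ Bℂᵀ v (Bℂᵀ *ᵥ v)
  have h2 := key _ _ Aℂᵀ v (Aℂᵀ *ᵥ v)
  rw [hBH] at h1
  rw [hAH] at h2
  rw [Matrix.add_mulVec, dotProduct_add, ← Matrix.mulVec_mulVec,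
    ← Matrix.mulVec_mulVec, h1, h2, hev] at hs
  -- compute the A-term
  have hAterm : star (μ • v) ⬝ᵥ (μ • v) = (Complex.normSq μ : ℂ) * (star v ⬝ᵥ v) := by
    rw [star_smul, smul_dotProduct, dotProduct_smul]
    rw [smul_eq_mul, smul_eq_mul, ← mul_assoc]
    congr 1
    simp [Complex.normSq_eq_conj_mul_self]
  rw [hAterm] at hs
  -- pass to real parts
  set w := Bℂᵀ *ᵥ v with hw
  have hT : star w ⬝ᵥ w = ((∑ i, Complex.normSq (w i) : ℝ) : ℂ) := by
    simp [dotProduct, Complex.normSq_eq_conj_mul_self, Pi.star_apply, RCLike.star_def]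
  have hS : star v ⬝ᵥ v = ((∑ i, Complex.normSq (v i) : ℝ) : ℂ) := by
    simp [dotProduct, Complex.normSq_eq_conj_mul_self, Pi.star_apply, RCLike.star_def]
  set T : ℝ := ∑ i, Complex.normSq (w i) with hTdef
  set S : ℝ := ∑ i, Complex.normSq (v i) with hSdef
  rw [hT, hS] at hs
  have hreal : T + Complex.normSq μ * S = S := by
    exact_mod_cast hs
  have hSpos : 0 < S := by
    rcases Function.ne_iff.mp hv0 with ⟨i, hi⟩
    exact Finset.sum_pos' (fun j _ => Complex.normSq_nonneg _)
      ⟨i, Finset.mem_univ i, Complex.normSq_pos.mpr hi⟩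
  have hT0 : T ≤ 0 := by
    have h1 : (1 : ℝ) ≤ Complex.normSq μ := by
      rw [← Complex.sq_norm]
      nlinarith
    nlinarith
  have hTnn : 0 ≤ T := Finset.sum_nonneg fun j _ => Complex.normSq_nonneg _
  have hw0 : w = 0 := by
    have hT0' : T = 0 := le_antisymm hT0 hTnn
    funext i
    have := (Finset.sum_eq_zero_iff_of_nonneg (fun j _ => Complex.normSq_nonneg (w j))).mp
      hT0' i (Finset.mem_univ i)
    simpa using Complex.normSq_eq_zero.mp this
  -- controllability contradiction
  have hpow : ∀ k : ℕ, Matrix.vecMul v (Aℂ ^ k) = μ ^ k • v := by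
    intro k
    induction k with
    | zero => simp
    | succ k ih =>
      rw [pow_succ, ← Matrix.vecMul_vecMul, ih, Matrix.smul_vecMul,
        ← Matrix.mulVec_transpose, hev, pow_succ, smul_smul]
  have hctrbC : ∀ k : ℕ, Matrix.vecMul v ((Aℂ ^ k) * Bℂ) = 0 := by
    intro k
    rw [← Matrix.vecMul_vecMul, hpow, Matrix.smul_vecMul, ← Matrix.mulVec_transpose, ← hw, hw0,
      smul_zero]
  have hre : (fun i => (v i).re) = 0 ∧ (fun i => (v i).im) = 0 := by
    constructor <;>
    · apply hctrb
      intro k _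
      funext j
      have h := congrFun (hctrbC k) j
      have hmapA : ∀ p : ℕ, (A ^ p).map (Complex.ofRealHom : ℝ →+* ℂ) = Aℂ ^ p := by
        intro p
        induction p with
        | zero => simp [Matrix.map_one]
        | succ p ih =>
          rw [pow_succ, Matrix.map_mul, ih, pow_succ]
          rfl
      have hmap : (Aℂ ^ k) * Bℂ = ((A ^ k) * B).map (Complex.ofRealHom : ℝ →+* ℂ) := by
        rw [Matrix.map_mul, hmapA]
        rfl
      rw [hmap] at h
      simp only [Matrix.vecMul, dotProduct, Matrix.map_apply, Complex.ofRealHom_eq_coe,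
        Pi.zero_apply] at h
      have hre := congrArg Complex.re h
      have him := congrArg Complex.im h
      simp only [Complex.re_sum, Complex.im_sum, Complex.mul_re, Complex.mul_im,
        Complex.ofReal_re, Complex.ofReal_im, mul_zero, zero_mul, sub_zero, add_zero,
        Complex.zero_re, Complex.zero_im, zero_add] at hre him
      simp only [Matrix.vecMul, dotProduct, Pi.zero_apply]
      first
      | exact hre
      | exact him
  apply hv0
  funext i
  have h1 := congrFun hre.1 i
  have h2 := congrFun hre.2 i
  simp only [Pi.zero_apply] at h1 h2
  exact Complex.ext h1 h2
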